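/- Let k be a field and C a k-linear abelian category. Let L be a nonzero object of C such that every endomorphism of L is a k-scalar multiple of id_L, and let 0 → L →^{i} E →^{p} L → 0 be a non-split short exact sequence. Then every endomorphism of E is of the form a • id_E + b • (i ∘ p) with a, b ∈ k; consequently End(E) is a commutative k-algebra of dimension 2 isomorphic to k[X]/(X²), and every endomorphism of E is either an isomorphism or has square equal to zero. -/

import Mathlib

open CategoryTheory Polynomial

lemma stmt5_aux (k : Type*) [Field k] {C : Type*} [Category C] [Abelian C] [Linear k C]
    (L E : C) (hL : ¬ Limits.IsZero L)
    (hEndL : ∀ f : L ⟶ L, ∃ a : k, f = a • 𝟙 L)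
    (i : L ⟶ E) (p : E ⟶ L) (w : i ≫ p = 0)
    (hse : (ShortComplex.mk i p w).ShortExact)
    (hns : ¬ ∃ σ : L ⟶ E, σ ≫ p = 𝟙 L) :
    (∀ φ : E ⟶ E, ∃ a b : k, φ = a • 𝟙 E + b • (p ≫ i)) ∧
    (∀ a b : k, a • 𝟙 E + b • (p ≫ i) = 0 → a = 0 ∧ b = 0) := by
  have hmono : Mono i := hse.mono_f
  have hepi : Epi p := hse.epi_g
  have hex : (ShortComplex.mk i p w).Exact := hse.exact
  have hine : i ≠ 0 := by
    intro h
    apply hL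
    rw [Limits.IsZero.iff_id_eq_zero]
    rw [← cancel_mono i, h]
    simp
  -- every map L ⟶ E composed with p is zero
  have hzero : ∀ x : L ⟶ E, x ≫ p = 0 := by
    intro x
    obtain ⟨c, hc⟩ := hEndL (x ≫ p)
    by_cases h : c = 0
    · rw [hc, h, zero_smul]
    · exfalso
      apply hns
      refine ⟨c⁻¹ • x, ?_⟩
      rw [Linear.smul_comp, hc, smul_smul, inv_mul_cancel₀ h, one_smul]
  -- every map L ⟶ E is a scalar multiple of i
  have hLE : ∀ x : L ⟶ E, ∃ a : k, x = a • i := by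
    intro x
    obtain ⟨l, hl⟩ := hex.lift' x (hzero x)
    obtain ⟨a, ha⟩ := hEndL l
    exact ⟨a, by rw [← hl, ha, Linear.smul_comp, Category.id_comp]⟩
  constructor
  · intro φ
    obtain ⟨a, ha⟩ := hLE (i ≫ φ)
    obtain ⟨h, hh⟩ := hex.desc' (φ - a • 𝟙 E)
      (by rw [Preadditive.comp_sub, Linear.comp_smul, Category.comp_id, ha, sub_self])
    obtain ⟨b, hb⟩ := hLE h
    refine ⟨a, b, ?_⟩
    have : φ - a • 𝟙 E = b • (p ≫ i) := by
      rw [← hh, hb, Linear.comp_smul]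
    rw [← this]; abel
  · have smulz : ∀ (a : k) (f : L ⟶ E), a ≠ 0 → a • f = 0 → f = 0 := by
      intro a f h hf
      have := congrArg (fun g => a⁻¹ • g) hf
      simpa [smul_smul, inv_mul_cancel₀ h] using this
    intro a b hab
    have ha : a = 0 := by
      have h1 : i ≫ (a • 𝟙 E + b • (p ≫ i)) = a • i := by
        simp [Preadditive.comp_add, Linear.comp_smul, reassoc_of% w]
      rw [hab, Limits.comp_zero] at h1
      by_contra h
      exact hine (smulz a i h h1.symm)
    subst ha
    rw [zero_smul, zero_add] at hab
    refine ⟨rfl, ?_⟩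
    by_contra h
    have hpi : p ≫ i = 0 := by
      have := congrArg (fun g => b⁻¹ • g) hab
      simpa [smul_smul, inv_mul_cancel₀ h] using this
    have : i = 0 := by rw [← cancel_epi p, hpi, Limits.comp_zero]
    exact hine this

theorem stmt5 (k : Type*) [Field k] {C : Type*} [Category C] [Abelian C] [Linear k C]
    (L E : C) (hL : ¬ Limits.IsZero L)
    (hEndL : ∀ f : L ⟶ L, ∃ a : k, f = a • 𝟙 L)
    (i : L ⟶ E) (p : E ⟶ L) (w : i ≫ p = 0)
    (hse : (ShortComplex.mk i p w).ShortExact)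
    (hns : ¬ ∃ σ : L ⟶ E, σ ≫ p = 𝟙 L) :
    (∀ φ : E ⟶ E, ∃ a b : k, φ = a • 𝟙 E + b • (p ≫ i)) ∧
    (∀ f g : E ⟶ E, f ≫ g = g ≫ f) ∧
    Module.rank k (E ⟶ E) = 2 ∧
    Nonempty ((Polynomial k ⧸ Ideal.span {(X : Polynomial k) ^ 2}) ≃ₐ[k] End E) ∧
    (∀ φ : E ⟶ E, IsIso φ ∨ φ ≫ φ = 0) := by
  obtain ⟨hform, hindep⟩ := stmt5_aux k L E hL hEndL i p w hse hns
  set N : E ⟶ E := p ≫ i with hN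
  have hNN : N ≫ N = 0 := by
    simp [hN, reassoc_of% w]
  -- expansion of composition
  have hcomp : ∀ a b c d : k,
      (a • 𝟙 E + b • N) ≫ (c • 𝟙 E + d • N)
        = (a * c) • 𝟙 E + (a * d + b * c) • N := by
    intro a b c d
    simp only [Preadditive.add_comp, Preadditive.comp_add, Linear.smul_comp,
      Linear.comp_smul, Category.id_comp, Category.comp_id, hNN, smul_smul,
      smul_zero, add_zero]
    module
  have hcommute : ∀ f g : E ⟶ E, f ≫ g = g ≫ f := by
    intro f g
    obtain ⟨a, b, rfl⟩ := hform f
    obtain ⟨c, d, rfl⟩ := hform g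
    rw [hcomp, hcomp]
    ring_nf
  refine ⟨hform, hcommute, ?_, ?_, ?_⟩
  · -- rank
    have hli : LinearIndependent k ![𝟙 E, N] := by
      rw [LinearIndependent.pair_iff]
      intro s t hst
      exact hindep s t hst
    have hsp : ⊤ ≤ Submodule.span k (Set.range ![𝟙 E, N]) := by
      intro φ _
      obtain ⟨a, b, rfl⟩ := hform φ
      have : Set.range ![𝟙 E, N] = {𝟙 E, N} := by
        simp [Matrix.range_cons, Matrix.range_empty, Set.pair_comm]
      rw [this]
      exact Submodule.mem_span_pair.2 ⟨a, b, rfl⟩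
    let bas : Module.Basis (Fin 2) k (E ⟶ E) := Module.Basis.mk hli hsp
    rw [rank_eq_card_basis bas]
    simp
  · -- algebra iso
    let NE : End E := N
    have hN2 : NE * NE = 0 := by
      rw [End.mul_def]
      exact hNN
    have hker : ∀ q ∈ Ideal.span {(X : Polynomial k) ^ 2}, aeval (R := k) NE q = 0 := by
      intro q hq
      obtain ⟨s, rfl⟩ := Ideal.mem_span_singleton'.1 hq
      rw [map_mul, map_pow, aeval_X, pow_two, hN2, mul_zero]
    let f := Ideal.Quotient.liftₐ _ (aeval (R := k) NE) hker
    have hf : ∀ q : Polynomial k, f (Ideal.Quotient.mk _ q) = aeval (R := k) NE q := by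
      intro q; rfl
    have haev : ∀ a b : k, aeval (R := k) NE (Polynomial.C b * X + Polynomial.C a) = a • 𝟙 E + b • N := by
      intro a b
      rw [map_add, map_mul, aeval_X, aeval_C, aeval_C,
        Algebra.algebraMap_eq_smul_one, Algebra.algebraMap_eq_smul_one,
        smul_mul_assoc, one_mul, add_comm]
      rfl
    refine ⟨AlgEquiv.ofBijective f ⟨?_, ?_⟩⟩
    · -- injective
      rw [injective_iff_map_eq_zero]
      intro qq hqq
      obtain ⟨q, rfl⟩ := Ideal.Quotient.mk_surjective qq
      rw [hf] at hqq
      have hm : Monic ((X : Polynomial k) ^ 2) := monic_X_pow 2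
      have hdiv : q %ₘ (X ^ 2) + X ^ 2 * (q /ₘ (X ^ 2)) = q := modByMonic_add_div q (X ^ 2)
      set r := q %ₘ ((X : Polynomial k) ^ 2) with hr
      have hr1 : r.degree ≤ 1 := by
        have h2 := degree_modByMonic_lt q hm
        rw [degree_X_pow] at h2
        exact Order.le_of_lt_succ (by exact_mod_cast h2)
      have hrform : r = Polynomial.C (r.coeff 1) * X + Polynomial.C (r.coeff 0) :=
        eq_X_add_C_of_degree_le_one hr1
      have haevq : aeval (R := k) NE q = aeval (R := k) NE r := by
        rw [← hdiv, map_add, map_mul, map_pow, aeval_X, pow_two, hN2, zero_mul, add_zero]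
      rw [haevq] at hqq
      have hq2 : aeval (R := k) NE r = (r.coeff 0) • 𝟙 E + (r.coeff 1) • N := by
        conv_lhs => rw [hrform]
        rw [haev]
      rw [hq2] at hqq
      obtain ⟨h0, h1⟩ := hindep _ _ hqq
      have hr0 : r = 0 := by rw [hrform, h0, h1]; simp
      rw [Ideal.Quotient.eq_zero_iff_mem, ← hdiv, hr0, zero_add]
      exact Ideal.mul_mem_right _ _ (Ideal.subset_span rfl)
    · -- surjective
      intro x
      obtain ⟨a, b, hx⟩ := hform x
      exact ⟨Ideal.Quotient.mk _ (Polynomial.C b * X + Polynomial.C a), by rw [hf, haev]; exact hx.symm⟩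
  · -- iso or square zero
    intro φ
    obtain ⟨a, b, rfl⟩ := hform φ
    by_cases h : a = 0
    · right
      rw [hcomp]
      subst h
      simp
    · left
      refine ⟨⟨a⁻¹ • 𝟙 E + (-(a⁻¹ * a⁻¹ * b)) • N, ?_, ?_⟩⟩
      · rw [hcomp, mul_inv_cancel₀ h, one_smul,
          show a * -(a⁻¹ * a⁻¹ * b) + b * a⁻¹ = 0 from by field_simp; ring,
          zero_smul, add_zero]
      · rw [hcomp, inv_mul_cancel₀ h, one_smul,
          show a⁻¹ * b + -(a⁻¹ * a⁻¹ * b) * a = 0 from by field_simp; ring,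
          zero_smul, add_zero]
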